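/- Let e and f be expressions and suppose e ≤ f holds under all relational interpretations. Then for every term u in Trm(e), there exists a term v in Trm(f) and a graph homomorphism from G(v) to G(u). (Key step: interpret each variable a over the vertex set of G(u) by the relation σ(a) = {(p,q) | (p,a,q) is an edge of G(u)}; then σ̂(u) contains the pair (input of G(u), output of G(u)), hence so does σ̂(f), and the Andréka–Bredikhin lemma yields the homomorphism.) -/

import Mathlib

/-- A 2-pointed labelled directed graph over label set `X`:
a finite vertex type, a set of labelled edges, and distinguished
input and output vertices. -/
structure PGraph (X : Type) where
  V : Type
  fin : Finite V
  E : Set (V × X × V)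
  inp : V
  out : V

/-- A graph homomorphism preserves the input, the output, and labelled edges. -/
def IsHom {X : Type} (G H : PGraph X) (φ : G.V → H.V) : Prop :=
  φ G.inp = H.inp ∧ φ G.out = H.out ∧
    ∀ p a q, (p, a, q) ∈ G.E → (φ p, a, φ q) ∈ H.E

/-- `gle G G'` (written `G ≲ G'`) iff there is a homomorphism from `G'` to `G`. -/
def gle {X : Type} (G G' : PGraph X) : Prop := ∃ φ : G'.V → G.V, IsHom G' G φ

/-- Graph of a variable: two vertices, one labelled edge from input to output. -/
def gvar {X : Type} (a : X) : PGraph X :=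
  ⟨Bool, inferInstance, {(false, a, true)}, false, true⟩

/-- Graph of `1`: one vertex, no edges. -/
def gone {X : Type} : PGraph X := ⟨Unit, inferInstance, ∅, (), ()⟩

/-- Graph of `⊤`: two isolated vertices. -/
def gtop {X : Type} : PGraph X := ⟨Bool, inferInstance, ∅, false, true⟩

/-- Converse of a graph: swap input and output. -/
def gconv {X : Type} (G : PGraph X) : PGraph X := ⟨G.V, G.fin, G.E, G.out, G.inp⟩

/-- Series composition: merge the output of `G` with the input of `H`. -/
def gseq {X : Type} (G H : PGraph X) : PGraph X :=
  let r : G.V ⊕ H.V → G.V ⊕ H.V → Prop :=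
    fun x y => x = Sum.inl G.out ∧ y = Sum.inr H.inp
  { V := Quot r
    fin := by
      have := G.fin; have := H.fin
      exact Finite.of_surjective (Quot.mk r) (fun q => Quot.exists_rep q)
    E := { e | (∃ p a q, (p, a, q) ∈ G.E ∧
                  e = (Quot.mk r (.inl p), a, Quot.mk r (.inl q)))
             ∨ (∃ p a q, (p, a, q) ∈ H.E ∧
                  e = (Quot.mk r (.inr p), a, Quot.mk r (.inr q))) }
    inp := Quot.mk r (.inl G.inp)
    out := Quot.mk r (.inr H.out) }

/-- Parallel composition: merge the inputs and merge the outputs. -/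
def gpar {X : Type} (G H : PGraph X) : PGraph X :=
  let r : G.V ⊕ H.V → G.V ⊕ H.V → Prop :=
    fun x y => (x = Sum.inl G.inp ∧ y = Sum.inr H.inp) ∨
               (x = Sum.inl G.out ∧ y = Sum.inr H.out)
  { V := Quot r
    fin := by
      have := G.fin; have := H.fin
      exact Finite.of_surjective (Quot.mk r) (fun q => Quot.exists_rep q)
    E := { e | (∃ p a q, (p, a, q) ∈ G.E ∧
                  e = (Quot.mk r (.inl p), a, Quot.mk r (.inl q)))
             ∨ (∃ p a q, (p, a, q) ∈ H.E ∧
                  e = (Quot.mk r (.inr p), a, Quot.mk r (.inr q))) }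
    inp := Quot.mk r (.inl G.inp)
    out := Quot.mk r (.inl G.out) }

/-- Terms: variables, composition, intersection, converse, `1` and `⊤`. -/
inductive Trm (X : Type) : Type
  | var : X → Trm X
  | comp : Trm X → Trm X → Trm X
  | inter : Trm X → Trm X → Trm X
  | conv : Trm X → Trm X
  | one : Trm X
  | top : Trm X

/-- The graph of a term. -/
def grOf {X : Type} : Trm X → PGraph X
  | .var a => gvar a
  | .comp u v => gseq (grOf u) (grOf v)
  | .inter u v => gpar (grOf u) (grOf v)
  | .conv u => gconv (grOf u)
  | .one => gone
  | .top => gtop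

/-- Relational interpretation of a term, given an interpretation `σ`
of the variables as binary relations on `S`. -/
def interp {X S : Type} (σ : X → S → S → Prop) : Trm X → S → S → Prop
  | .var a => σ a
  | .comp u v => fun i j => ∃ k, interp σ u i k ∧ interp σ v k j
  | .inter u v => fun i j => interp σ u i j ∧ interp σ v i j
  | .conv u => fun i j => interp σ u j i
  | .one => fun i j => i = j
  | .top => fun _ _ => True

/-- Expressions: terms extended with `0`, union and strict iteration. -/
inductive Expr (X : Type) : Type
  | var : X → Expr X
  | comp : Expr X → Expr X → Expr X
  | inter : Expr X → Expr X → Expr X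
  | plus : Expr X → Expr X → Expr X
  | iter : Expr X → Expr X
  | conv : Expr X → Expr X
  | zero : Expr X
  | one : Expr X
  | top : Expr X

/-- The set of terms of an expression. -/
def trms {X : Type} : Expr X → Set (Trm X)
  | .var a => {Trm.var a}
  | .comp e f => {w | ∃ u ∈ trms e, ∃ v ∈ trms f, w = Trm.comp u v}
  | .inter e f => {w | ∃ u ∈ trms e, ∃ v ∈ trms f, w = Trm.inter u v}
  | .plus e f => trms e ∪ trms f
  | .iter e => {w | ∃ u, ∃ l : List (Trm X),
      u ∈ trms e ∧ (∀ v ∈ l, v ∈ trms e) ∧ w = l.foldl Trm.comp u}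
  | .conv e => {w | ∃ u ∈ trms e, w = Trm.conv u}
  | .zero => ∅
  | .one => {Trm.one}
  | .top => {Trm.top}

/-- Relational interpretation of an expression. -/
def einterp {X S : Type} (σ : X → S → S → Prop) : Expr X → S → S → Prop
  | .var a => σ a
  | .comp e f => fun i j => ∃ k, einterp σ e i k ∧ einterp σ f k j
  | .inter e f => fun i j => einterp σ e i j ∧ einterp σ f i j
  | .plus e f => fun i j => einterp σ e i j ∨ einterp σ f i j
  | .iter e => Relation.TransGen (einterp σ e)
  | .conv e => fun i j => einterp σ e j i
  | .zero => fun _ _ => False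
  | .one => fun i j => i = j
  | .top => fun _ _ => True

/-- Relational homomorphism: a map from the vertices of `G` to `S` sending
input to `i`, output to `j`, and edges into `σ`. -/
def RHom {X S : Type} (G : PGraph X) (σ : X → S → S → Prop) (i j : S)
    (φ : G.V → S) : Prop :=
  φ G.inp = i ∧ φ G.out = j ∧ ∀ p a q, (p, a, q) ∈ G.E → σ a (φ p) (φ q)

/-- Andréka–Bredikhin lemma. -/
theorem AB {X S : Type} (σ : X → S → S → Prop) :
    ∀ (w : Trm X) (i j : S), interp σ w i j ↔ ∃ φ, RHom (grOf w) σ i j φ := by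
  intro w
  induction w with
  | var a =>
    intro i j
    constructor
    · intro h
      refine ⟨fun b => cond b j i, rfl, rfl, ?_⟩
      rintro p a' q hpq
      simp only [grOf, gvar, Set.mem_singleton_iff, Prod.mk.injEq] at hpq
      obtain ⟨hp, ha, hq⟩ := hpq
      exact h
    · rintro ⟨φ, h1, h2, h3⟩
      have := h3 false a true rfl
      rwa [show φ false = i from h1, show φ true = j from h2] at this
  | comp u v ihu ihv =>
    intro i j
    constructor
    · rintro ⟨k, hu, hv⟩
      obtain ⟨φ1, e1, e1', h1⟩ := (ihu i k).mp hu
      obtain ⟨φ2, e2, e2', h2⟩ := (ihv k j).mp hv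
      refine ⟨Quot.lift (Sum.elim φ1 φ2) ?_, ?_, ?_, ?_⟩
      · rintro x y ⟨hx, hy⟩; subst hx; subst hy
        simp [e1', e2]
      · exact e1
      · exact e2'
      · rintro p a q (⟨p', a', q', hpq, he⟩ | ⟨p', a', q', hpq, he⟩) <;>
        · cases he
          first
          | exact h1 _ _ _ hpq
          | exact h2 _ _ _ hpq
    · rintro ⟨ψ, h1, h2, h3⟩
      refine ⟨ψ (Quot.mk _ (.inl (grOf u).out)), ?_, ?_⟩
      · exact (ihu i _).mpr ⟨fun x => ψ (Quot.mk _ (.inl x)), h1, rfl,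
          fun p a q hpq => h3 _ _ _ (Or.inl ⟨p, a, q, hpq, rfl⟩)⟩
      · refine (ihv _ j).mpr ⟨fun x => ψ (Quot.mk _ (.inr x)), ?_, h2,
          fun p a q hpq => h3 _ _ _ (Or.inr ⟨p, a, q, hpq, rfl⟩)⟩
        exact congrArg ψ (Quot.sound ⟨rfl, rfl⟩).symm
  | inter u v ihu ihv =>
    intro i j
    constructor
    · rintro ⟨hu, hv⟩
      obtain ⟨φ1, e1, e1', h1⟩ := (ihu i j).mp hu
      obtain ⟨φ2, e2, e2', h2⟩ := (ihv i j).mp hv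
      refine ⟨Quot.lift (Sum.elim φ1 φ2) ?_, ?_, ?_, ?_⟩
      · rintro x y (⟨hx, hy⟩ | ⟨hx, hy⟩) <;> (subst hx; subst hy)
        · simp [e1, e2]
        · simp [e1', e2']
      · exact e1
      · exact e1'
      · rintro p a q (⟨p', a', q', hpq, he⟩ | ⟨p', a', q', hpq, he⟩) <;>
        · cases he
          first
          | exact h1 _ _ _ hpq
          | exact h2 _ _ _ hpq
    · rintro ⟨ψ, h1, h2, h3⟩
      constructor
      · exact (ihu i j).mpr ⟨fun x => ψ (Quot.mk _ (.inl x)), h1, h2,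
          fun p a q hpq => h3 _ _ _ (Or.inl ⟨p, a, q, hpq, rfl⟩)⟩
      · refine (ihv i j).mpr ⟨fun x => ψ (Quot.mk _ (.inr x)), ?_, ?_,
          fun p a q hpq => h3 _ _ _ (Or.inr ⟨p, a, q, hpq, rfl⟩)⟩
        · have hq : (Quot.mk _ (Sum.inl (grOf u).inp) : (grOf (Trm.inter u v)).V) =
              Quot.mk _ (Sum.inr (grOf v).inp) := Quot.sound (Or.inl ⟨rfl, rfl⟩)
          exact (congrArg ψ hq.symm).trans h1
        · have hq : (Quot.mk _ (Sum.inl (grOf u).out) : (grOf (Trm.inter u v)).V) =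
              Quot.mk _ (Sum.inr (grOf v).out) := Quot.sound (Or.inr ⟨rfl, rfl⟩)
          exact (congrArg ψ hq.symm).trans h2
  | conv u ihu =>
    intro i j
    constructor
    · intro h
      obtain ⟨φ, a1, a2, a3⟩ := (ihu j i).mp h
      exact ⟨φ, a2, a1, a3⟩
    · rintro ⟨φ, a1, a2, a3⟩
      exact (ihu j i).mpr ⟨φ, a2, a1, a3⟩
  | one =>
    intro i j
    constructor
    · rintro rfl
      exact ⟨fun _ => i, rfl, rfl, fun p a q h => h.elim⟩
    · rintro ⟨φ, h1, h2, _⟩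
      rw [← h1, ← h2]; rfl
  | top =>
    intro i j
    exact ⟨fun _ => ⟨fun b => cond b j i, rfl, rfl, fun p a q h => h.elim⟩,
      fun _ => trivial⟩

theorem einterp_of_interp {X S : Type} (σ : X → S → S → Prop) :
    ∀ (e : Expr X) (u : Trm X), u ∈ trms e → ∀ i j,
      interp σ u i j → einterp σ e i j := by
  intro e
  induction e with
  | var a => rintro u rfl i j h; exact h
  | comp e f ihe ihf =>
    rintro u ⟨u1, hu1, u2, hu2, rfl⟩ i j ⟨k, h1, h2⟩
    exact ⟨k, ihe _ hu1 _ _ h1, ihf _ hu2 _ _ h2⟩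
  | inter e f ihe ihf =>
    rintro u ⟨u1, hu1, u2, hu2, rfl⟩ i j ⟨h1, h2⟩
    exact ⟨ihe _ hu1 _ _ h1, ihf _ hu2 _ _ h2⟩
  | plus e f ihe ihf =>
    rintro u (h | h) i j hh
    · exact Or.inl (ihe _ h _ _ hh)
    · exact Or.inr (ihf _ h _ _ hh)
  | iter e ihe =>
    rintro u ⟨u0, l, hu0, hl, rfl⟩ i j h
    have key : ∀ (l : List (Trm X)) (u0 : Trm X), u0 ∈ trms e →
        (∀ v ∈ l, v ∈ trms e) → ∀ i j,
        interp σ (l.foldl Trm.comp u0) i j →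
        Relation.TransGen (einterp σ e) i j := by
      intro l
      induction l using List.reverseRecOn with
      | nil => intro u0 hu0 _ i j h; exact .single (ihe _ hu0 _ _ h)
      | append_singleton l w ih =>
        intro u0 hu0 hl i j h
        rw [List.foldl_append] at h
        obtain ⟨k, h1, h2⟩ := h
        exact (ih u0 hu0 (fun v hv => hl v (by simp [hv])) i k h1).tail
          (ihe _ (hl w (by simp)) _ _ h2)
    exact key l u0 hu0 hl i j h
  | conv e ihe =>
    rintro u ⟨u', hu', rfl⟩ i j h
    exact ihe _ hu' j i h
  | zero => rintro u hu; exact hu.elim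
  | one => rintro u rfl i j h; exact h
  | top => rintro u rfl i j h; trivial

theorem exists_trm_of_einterp {X S : Type} (σ : X → S → S → Prop) :
    ∀ (e : Expr X) (i j : S), einterp σ e i j → ∃ u ∈ trms e, interp σ u i j := by
  intro e
  induction e with
  | var a => exact fun i j h => ⟨.var a, rfl, h⟩
  | comp e f ihe ihf =>
    rintro i j ⟨k, h1, h2⟩
    obtain ⟨u, hu, hu'⟩ := ihe _ _ h1
    obtain ⟨v, hv, hv'⟩ := ihf _ _ h2
    exact ⟨.comp u v, ⟨u, hu, v, hv, rfl⟩, k, hu', hv'⟩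
  | inter e f ihe ihf =>
    rintro i j ⟨h1, h2⟩
    obtain ⟨u, hu, hu'⟩ := ihe _ _ h1
    obtain ⟨v, hv, hv'⟩ := ihf _ _ h2
    exact ⟨.inter u v, ⟨u, hu, v, hv, rfl⟩, hu', hv'⟩
  | plus e f ihe ihf =>
    rintro i j (h | h)
    · obtain ⟨u, hu, hu'⟩ := ihe _ _ h
      exact ⟨u, Or.inl hu, hu'⟩
    · obtain ⟨u, hu, hu'⟩ := ihf _ _ h
      exact ⟨u, Or.inr hu, hu'⟩
  | iter e ihe =>
    intro i j h
    induction h with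
    | single h' =>
      obtain ⟨u, hu, hu'⟩ := ihe _ _ h'
      exact ⟨u, ⟨u, [], hu, by simp, rfl⟩, hu'⟩
    | tail h1 h2 ih =>
      obtain ⟨u, ⟨u0, l, hu0, hl, rfl⟩, hu'⟩ := ih
      obtain ⟨w, hw, hw'⟩ := ihe _ _ h2
      refine ⟨(l ++ [w]).foldl Trm.comp u0, ⟨u0, l ++ [w], hu0, ?_, rfl⟩, ?_⟩
      · intro v hv
        rcases List.mem_append.mp hv with h | h
        · exact hl v h
        · rw [List.mem_singleton.mp h]; exact hw
      · rw [List.foldl_append]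
        exact ⟨_, hu', hw'⟩
  | conv e ihe =>
    intro i j h
    obtain ⟨u, hu, hu'⟩ := ihe _ _ h
    exact ⟨.conv u, ⟨u, hu, rfl⟩, hu'⟩
  | zero => exact fun i j h => h.elim
  | one => exact fun i j h => ⟨.one, rfl, h⟩
  | top => exact fun i j _ => ⟨.top, rfl, trivial⟩

/-- If `e ≤ f` holds under all relational interpretations, then every term of
`e` is dominated (modulo homomorphism) by some term of `f`. -/
theorem trm_hom_of_rel_le {X : Type} (e f : Expr X)
    (h : ∀ (S : Type) (σ : X → S → S → Prop) (i j : S),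
      einterp σ e i j → einterp σ f i j) :
    ∀ u ∈ trms e, ∃ v ∈ trms f,
      ∃ φ : (grOf v).V → (grOf u).V, IsHom (grOf v) (grOf u) φ := by
  intro u hu
  set σ : X → (grOf u).V → (grOf u).V → Prop :=
    fun a p q => (p, a, q) ∈ (grOf u).E with hσ
  have hid : interp σ u (grOf u).inp (grOf u).out :=
    (AB σ u _ _).mpr ⟨id, rfl, rfl, fun p a q h => h⟩
  have he : einterp σ e (grOf u).inp (grOf u).out :=
    einterp_of_interp σ e u hu _ _ hid
  have hf := h _ σ _ _ he
  obtain ⟨v, hv, hv'⟩ := exists_trm_of_einterp σ f _ _ hf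
  obtain ⟨φ, a1, a2, a3⟩ := (AB σ v _ _).mp hv'
  exact ⟨v, hv, φ, a1, a2, a3⟩
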